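/- If the coefficient sequences a^{(α)} and a^{(-α)} satisfy (∑ a_n^{(α)} t^n/[n]_q!)(∑ a_n^{(-α)} t^n/[n]_q!) = 1 as formal power series, then R_n(x,y;u|q) = ∑_{k=0}^n [n choose k]_q P_{k,q}^{(α)}(x) P_{n-k,q}^{(-α)}(y;u), where R_n(x,y;u|q) = ∑_{j=0}^n [n choose j]_q u^{C(n-j,2)} x^j y^{n-j}. -/

import Mathlib

open Finset

def qNum {K : Type*} [Field K] (q : K) (n : ℕ) : K := ∑ i ∈ Finset.range n, q ^ i

def qFact {K : Type*} [Field K] (q : K) : ℕ → K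
  | 0 => 1
  | n + 1 => qFact q n * qNum q (n + 1)

def qBinom {K : Type*} [Field K] (q : K) (n k : ℕ) : K :=
  qFact q n / (qFact q k * qFact q (n - k))

section auxiliary

lemma tri_aux {M : Type*} [AddCommMonoid M] (f : ℕ → ℕ → M) (n : ℕ) :
    ∑ k ∈ range (n+1), ∑ j ∈ range (k+1), f k j
      = ∑ j ∈ range (n+1), ∑ s ∈ range (n - j + 1), f (j+s) j := by
  induction n with
  | zero => simp
  | succ n ih =>
    have h1 : ∀ j ∈ range (n+1), ∑ s ∈ range (n + 1 - j + 1), f (j+s) j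
        = (∑ s ∈ range (n - j + 1), f (j+s) j) + f (n+1) j := by
      intro j hj
      have hj' : j ≤ n := by simpa [Nat.lt_succ_iff] using hj
      rw [show n + 1 - j + 1 = (n - j + 1) + 1 by omega, sum_range_succ]
      congr 2
      omega
    rw [sum_range_succ, ih]
    conv_rhs => rw [sum_range_succ]
    rw [sum_congr rfl h1, sum_add_distrib,
      sum_range_succ (f := fun j => f (n+1) j)]
    simp only [Nat.sub_self, zero_add, sum_range_one, Nat.add_zero]
    abel

lemma tri_swap_aux {M : Type*} [AddCommMonoid M] (g : ℕ → ℕ → M) (n : ℕ) :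
    ∑ j ∈ range (n+1), ∑ s ∈ range (n - j + 1), g j s
      = ∑ s ∈ range (n+1), ∑ j ∈ range (n - s + 1), g j s := by
  have h1 : ∑ j ∈ range (n+1), ∑ s ∈ range (n - j + 1), g j s
      = ∑ k ∈ range (n+1), ∑ j ∈ range (k+1), g j (k - j) := by
    rw [tri_aux (fun k j => g j (k - j)) n]
    refine sum_congr rfl fun j hj => sum_congr rfl fun s hs => ?_
    congr 1
    omega
  have h2 : ∑ s ∈ range (n+1), ∑ j ∈ range (n - s + 1), g j s
      = ∑ k ∈ range (n+1), ∑ s ∈ range (k+1), g (k - s) s := by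
    rw [tri_aux (fun k s => g (k - s) s) n]
    refine sum_congr rfl fun j hj => sum_congr rfl fun s hs => ?_
    congr 1
    omega
  rw [h1, h2]
  refine sum_congr rfl fun k hk => ?_
  rw [← Finset.sum_range_reflect]
  refine sum_congr rfl fun j hj => ?_
  have hj' : j ≤ k := by simpa [Nat.lt_succ_iff] using hj
  congr 1
  omega

variable {K : Type*} [Field K] (q u : K)

lemma qFact_ne_zero (hq : ∀ n : ℕ, 0 < n → qNum q n ≠ 0) : ∀ n, qFact q n ≠ 0 := by
  intro n
  induction n with
  | zero => simp [qFact]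
  | succ n ih => simpa [qFact] using ⟨ih, hq (n+1) (Nat.succ_pos n)⟩

lemma qBinom_zero (hq : ∀ n : ℕ, 0 < n → qNum q n ≠ 0) (n : ℕ) : qBinom q n 0 = 1 := by
  simp [qBinom, qFact, div_self (qFact_ne_zero q hq n)]

lemma qBinom_mul1 (hq : ∀ n : ℕ, 0 < n → qNum q n ≠ 0) (n j s : ℕ) :
    qBinom q n (j + s) * qBinom q (j + s) j = qBinom q n s * qBinom q (n - s) j := by
  have F := qFact_ne_zero q hq
  unfold qBinom
  rw [show j + s - j = s from Nat.add_sub_cancel_left j s,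
    show n - (j + s) = n - j - s by omega, show n - s - j = n - j - s by omega]
  field_simp
  rw [div_eq_div_iff (mul_ne_zero (mul_ne_zero (mul_ne_zero (F _) (F _)) (F _)) (F _))
    (mul_ne_zero (mul_ne_zero (mul_ne_zero (F _) (F _)) (F _)) (F _))]
  ring

lemma qBinom_mul2 (hq : ∀ n : ℕ, 0 < n → qNum q n ≠ 0) (n j s : ℕ) :
    qBinom q n (j + s) * qBinom q (j + s) j = qBinom q n j * qBinom q (n - j) s := by
  have F := qFact_ne_zero q hq
  unfold qBinom
  rw [show j + s - j = s from Nat.add_sub_cancel_left j s,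
    show n - (j + s) = n - j - s by omega]
  field_simp
  rw [div_eq_div_iff (mul_ne_zero (mul_ne_zero (mul_ne_zero (F _) (F _)) (F _)) (F _))
    (mul_ne_zero (mul_ne_zero (mul_ne_zero (F _) (F _)) (F _)) (F _))]
  ring

/-- abbreviation for the "negative order" q-Appell polynomial value -/
def Bv (q u : K) (b : ℕ → K) (y : K) (N : ℕ) : K :=
  ∑ i ∈ range (N+1), qBinom q N i * u ^ ((N - i).choose 2) * b i * y ^ (N - i)

lemma keyL (hq : ∀ n : ℕ, 0 < n → qNum q n ≠ 0) (a b : ℕ → K)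
    (hconv : ∀ n : ℕ,
      (∑ k ∈ Finset.range (n + 1), qBinom q n k * a k * b (n - k)) =
        if n = 0 then 1 else 0) (N : ℕ) (y : K) :
    ∑ j ∈ range (N+1), qBinom q N j * a j * Bv q u b y (N - j)
      = u ^ (N.choose 2) * y ^ N := by
  have F := qFact_ne_zero q hq
  calc
    ∑ j ∈ range (N+1), qBinom q N j * a j * Bv q u b y (N - j)
      = ∑ j ∈ range (N+1), ∑ i ∈ range (N - j + 1),
          qBinom q N j * qBinom q (N-j) i * a j * b i
            * (u ^ ((N-j-i).choose 2) * y ^ (N-j-i)) := by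
        refine sum_congr rfl fun j hj => ?_
        rw [Bv, mul_sum]
        exact sum_congr rfl fun i hi => by ring
    _ = ∑ m ∈ range (N+1), ∑ j ∈ range (m+1),
          qBinom q N j * qBinom q (N-j) (m-j) * a j * b (m-j)
            * (u ^ ((N-j-(m-j)).choose 2) * y ^ (N-j-(m-j))) := by
        rw [tri_aux (fun m j => qBinom q N j * qBinom q (N-j) (m-j) * a j * b (m-j)
            * (u ^ ((N-j-(m-j)).choose 2) * y ^ (N-j-(m-j)))) N]
        refine sum_congr rfl fun j hj => sum_congr rfl fun s hs => ?_
        rw [Nat.add_sub_cancel_left]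
    _ = ∑ m ∈ range (N+1), u ^ ((N-m).choose 2) * y ^ (N-m) * qBinom q N m *
          (∑ j ∈ range (m+1), qBinom q m j * a j * b (m - j)) := by
        refine sum_congr rfl fun m hm => ?_
        have hm' : m ≤ N := by simpa [Nat.lt_succ_iff] using hm
        rw [mul_sum]
        refine sum_congr rfl fun j hj => ?_
        have hj' : j ≤ m := by simpa [Nat.lt_succ_iff] using hj
        have e1 : N - j - (m - j) = N - m := by omega
        have e2 : qBinom q N j * qBinom q (N-j) (m-j) = qBinom q N m * qBinom q m j := by
          have h := qBinom_mul2 q hq N j (m - j)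
          rw [show j + (m - j) = m by omega] at h
          exact h.symm
        rw [e1, e2]
        ring
    _ = ∑ m ∈ range (N+1), u ^ ((N-m).choose 2) * y ^ (N-m) * qBinom q N m *
          (if m = 0 then 1 else 0) := by
        exact sum_congr rfl fun m _ => by rw [hconv m]
    _ = u ^ (N.choose 2) * y ^ N := by
        rw [Finset.sum_eq_single 0]
        · simp [qBinom_zero q hq]
        · intro m _ hm
          simp [hm]
        · intro h
          simp at h

end auxiliary

/-- If the determining sequences of orders α and -α are convolution-inverse, then
R_n(x,y;u|q) = ∑_{k=0}^n [n,k]_q P_k^{(α)}(x) P_{n-k}^{(-α)}(y;u). -/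
theorem deformed_homog_as_qAppell_product {K : Type*} [Field K] (q u : K)
    (hq : ∀ n : ℕ, 0 < n → qNum q n ≠ 0)
    (a b : ℕ → K)
    (hconv : ∀ n : ℕ,
      (∑ k ∈ Finset.range (n + 1), qBinom q n k * a k * b (n - k)) =
        if n = 0 then 1 else 0) :
    ∀ (n : ℕ) (x y : K),
      (∑ j ∈ Finset.range (n + 1),
          qBinom q n j * u ^ ((n - j).choose 2) * x ^ j * y ^ (n - j)) =
        ∑ k ∈ Finset.range (n + 1), qBinom q n k *
          (∑ j ∈ Finset.range (k + 1), qBinom q k j * a j * x ^ (k - j)) *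
          (∑ j ∈ Finset.range (n - k + 1),
            qBinom q (n - k) j * u ^ ((n - k - j).choose 2) * b j * y ^ (n - k - j)) := by
  intro n x y
  symm
  calc
    ∑ k ∈ range (n+1), qBinom q n k *
        (∑ j ∈ range (k+1), qBinom q k j * a j * x ^ (k - j)) * Bv q u b y (n - k)
      = ∑ k ∈ range (n+1), ∑ j ∈ range (k+1),
          qBinom q n k * qBinom q k j * a j * x ^ (k - j) * Bv q u b y (n - k) := by
        refine sum_congr rfl fun k _ => ?_
        rw [mul_sum, sum_mul]
        exact sum_congr rfl fun j _ => by ring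
    _ = ∑ j ∈ range (n+1), ∑ s ∈ range (n - j + 1),
          qBinom q n (j+s) * qBinom q (j+s) j * a j * x ^ s * Bv q u b y (n - (j+s)) := by
        rw [tri_aux (fun k j => qBinom q n k * qBinom q k j * a j * x ^ (k - j)
            * Bv q u b y (n - k)) n]
        refine sum_congr rfl fun j _ => sum_congr rfl fun s _ => ?_
        rw [Nat.add_sub_cancel_left]
    _ = ∑ j ∈ range (n+1), ∑ s ∈ range (n - j + 1),
          qBinom q n s * x ^ s * (qBinom q (n - s) j * a j * Bv q u b y (n - s - j)) := by
        refine sum_congr rfl fun j _ => sum_congr rfl fun s _ => ?_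
        rw [qBinom_mul1 q hq n j s, show n - (j+s) = n - s - j by omega]
        ring
    _ = ∑ s ∈ range (n+1), ∑ j ∈ range (n - s + 1),
          qBinom q n s * x ^ s * (qBinom q (n - s) j * a j * Bv q u b y (n - s - j)) := by
        exact tri_swap_aux _ n
    _ = ∑ s ∈ range (n+1), qBinom q n s * x ^ s * (u ^ ((n-s).choose 2) * y ^ (n-s)) := by
        refine sum_congr rfl fun s _ => ?_
        rw [← mul_sum, keyL q u hq a b hconv (n - s) y]
    _ = ∑ j ∈ range (n+1), qBinom q n j * u ^ ((n - j).choose 2) * x ^ j * y ^ (n - j) := by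
        exact sum_congr rfl fun j _ => by ring
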